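/- Let x̂ minimize the nLasso objective h over ℝ^V and let ŷ maximize the dual objective D over all feasible flows. Let C = {i ∈ V : x̂_i > 1/2} be the thresholded cluster. Then every boundary edge is saturated with flow directed out of C: for every e = (i,j) ∈ ∂C, if i ∈ C then ŷ_e = λ W_e, and if j ∈ C then ŷ_e = −λ W_e. -/

import Mathlib

open Finset

/-- Total variation of a graph signal `x` w.r.t. oriented edge set `E` and weights `W`. -/
noncomputable def TV {n : ℕ} (E : Finset (Fin n × Fin n)) (W : Fin n × Fin n → ℝ)
    (x : Fin n → ℝ) : ℝ :=
  ∑ e ∈ E, W e * |x e.1 - x e.2|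

/-- The network Lasso objective. -/
noncomputable def nLasso {n : ℕ} (E : Finset (Fin n × Fin n)) (W : Fin n × Fin n → ℝ)
    (S : Finset (Fin n)) (α lam : ℝ) (x : Fin n → ℝ) : ℝ :=
  ∑ i ∈ S, (x i - 1) ^ 2 / 2 + ∑ i ∈ Sᶜ, α * x i ^ 2 / 2 + lam * TV E W x

/-- Divergence of the flow `y` at node `i`: outgoing minus incoming flow. -/
noncomputable def divg {n : ℕ} (E : Finset (Fin n × Fin n)) (y : Fin n × Fin n → ℝ)
    (i : Fin n) : ℝ :=
  ∑ e ∈ E.filter (fun e => e.1 = i), y e - ∑ e ∈ E.filter (fun e => e.2 = i), y e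

/-- The dual (flow) objective of the network Lasso. -/
noncomputable def dualObj {n : ℕ} (E : Finset (Fin n × Fin n)) (S : Finset (Fin n))
    (α : ℝ) (y : Fin n × Fin n → ℝ) : ℝ :=
  -∑ i ∈ S, (divg E y i ^ 2 / 2 - divg E y i) - ∑ i ∈ Sᶜ, divg E y i ^ 2 / (2 * α)

/-- The boundary of a node set `C`: edges with exactly one endpoint in `C`. -/
def bdry {n : ℕ} (E : Finset (Fin n × Fin n)) (C : Finset (Fin n)) :
    Finset (Fin n × Fin n) :=
  E.filter (fun e => (e.1 ∈ C ∧ e.2 ∉ C) ∨ (e.1 ∉ C ∧ e.2 ∈ C))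

/- ---------- auxiliary machinery ---------- -/

lemma sum_mul_divg {n : ℕ} (E : Finset (Fin n × Fin n)) (y : Fin n × Fin n → ℝ)
    (x : Fin n → ℝ) :
    ∑ i, x i * divg E y i = ∑ e ∈ E, y e * (x e.1 - x e.2) := by
  have h1 : ∀ i : Fin n, x i * divg E y i =
      (∑ e ∈ E.filter (fun e => e.1 = i), y e * x e.1)
      - ∑ e ∈ E.filter (fun e => e.2 = i), y e * x e.2 := by
    intro i
    unfold divg
    rw [mul_sub, mul_sum, mul_sum]
    congr 1
    · exact Finset.sum_congr rfl fun e he => by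
        simp only [mem_filter] at he; rw [he.2]; ring
    · exact Finset.sum_congr rfl fun e he => by
        simp only [mem_filter] at he; rw [he.2]; ring
  calc ∑ i, x i * divg E y i
      = ∑ i, ((∑ e ∈ E.filter (fun e => e.1 = i), y e * x e.1)
        - ∑ e ∈ E.filter (fun e => e.2 = i), y e * x e.2) :=
        Finset.sum_congr rfl fun i _ => h1 i
    _ = (∑ e ∈ E, y e * x e.1) - ∑ e ∈ E, y e * x e.2 := by
        rw [Finset.sum_sub_distrib,
          Finset.sum_fiberwise E (fun e => e.1) (fun e => y e * x e.1),
          Finset.sum_fiberwise E (fun e => e.2) (fun e => y e * x e.2)]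
    _ = ∑ e ∈ E, y e * (x e.1 - x e.2) := by
        rw [← Finset.sum_sub_distrib]
        exact Finset.sum_congr rfl fun e _ => by ring

noncomputable def phi {n : ℕ} (S : Finset (Fin n)) (α : ℝ) (i : Fin n) (d : ℝ) : ℝ :=
  if i ∈ S then d ^ 2 / 2 - d else d ^ 2 / (2 * α)

noncomputable def psi {n : ℕ} (S : Finset (Fin n)) (α : ℝ) (i : Fin n) (d : ℝ) : ℝ :=
  if i ∈ S then d - 1 else d / α

noncomputable def cc {n : ℕ} (S : Finset (Fin n)) (α : ℝ) (i : Fin n) : ℝ :=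
  if i ∈ S then 1 / 2 else 1 / (2 * α)

/-- The candidate primal point built out of a flow `y`. -/
noncomputable def xst {n : ℕ} (E : Finset (Fin n × Fin n)) (S : Finset (Fin n))
    (α : ℝ) (y : Fin n × Fin n → ℝ) (i : Fin n) : ℝ :=
  -psi S α i (divg E y i)

lemma cc_pos {n : ℕ} (S : Finset (Fin n)) {α : ℝ} (hα : 0 < α) (i : Fin n) :
    0 < cc S α i := by
  unfold cc; split <;> positivity

lemma phi_add {n : ℕ} (S : Finset (Fin n)) {α : ℝ} (hα : 0 < α) (i : Fin n) (d s : ℝ) :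
    phi S α i (d + s) = phi S α i d + s * psi S α i d + s ^ 2 * cc S α i := by
  unfold phi psi cc
  split
  · ring
  · field_simp; ring

lemma dualObj_eq_sum {n : ℕ} (E : Finset (Fin n × Fin n)) (S : Finset (Fin n))
    (α : ℝ) (y : Fin n × Fin n → ℝ) :
    dualObj E S α y = -∑ i, phi S α i (divg E y i) := by
  unfold dualObj
  rw [← Finset.sum_add_sum_compl S (fun i => phi S α i (divg E y i))]
  have h1 : ∑ i ∈ S, phi S α i (divg E y i) = ∑ i ∈ S, (divg E y i ^ 2 / 2 - divg E y i) :=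
    Finset.sum_congr rfl fun i hi => by unfold phi; rw [if_pos hi]
  have h2 : ∑ i ∈ Sᶜ, phi S α i (divg E y i) = ∑ i ∈ Sᶜ, divg E y i ^ 2 / (2 * α) :=
    Finset.sum_congr rfl fun i hi => by
      unfold phi; rw [if_neg (Finset.mem_compl.mp hi)]
  rw [h1, h2]; ring

lemma divg_update {n : ℕ} (E : Finset (Fin n × Fin n)) (y : Fin n × Fin n → ℝ)
    (e : Fin n × Fin n) (he : e ∈ E) (t : ℝ) (i : Fin n) :
    divg E (fun f => y f + if f = e then t else 0) i
      = divg E y i + ((if e.1 = i then t else 0) - (if e.2 = i then t else 0)) := by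
  unfold divg
  rw [Finset.sum_add_distrib, Finset.sum_add_distrib]
  rw [Finset.sum_ite_eq' (E.filter (fun f => f.1 = i)) e (fun _ => t),
      Finset.sum_ite_eq' (E.filter (fun f => f.2 = i)) e (fun _ => t)]
  simp only [Finset.mem_filter, he, true_and]
  ring

lemma dualObj_update {n : ℕ} (E : Finset (Fin n × Fin n)) (S : Finset (Fin n))
    {α : ℝ} (hα : 0 < α) (y : Fin n × Fin n → ℝ) (e : Fin n × Fin n)
    (he : e ∈ E) (hne : e.1 ≠ e.2) (t : ℝ) :
    dualObj E S α (fun f => y f + if f = e then t else 0)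
      = dualObj E S α y
        + t * (xst E S α y e.1 - xst E S α y e.2)
        - t ^ 2 * (cc S α e.1 + cc S α e.2) := by
  rw [dualObj_eq_sum, dualObj_eq_sum]
  have key : ∀ i, phi S α i (divg E (fun f => y f + if f = e then t else 0) i)
      = phi S α i (divg E y i)
        + ((if e.1 = i then t * psi S α i (divg E y i) + t ^ 2 * cc S α i else 0)
          + (if e.2 = i then -(t * psi S α i (divg E y i)) + t ^ 2 * cc S α i else 0)) := by
    intro i
    rw [divg_update E y e he t i, phi_add S hα]
    by_cases h1 : e.1 = i <;> by_cases h2 : e.2 = i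
    · exact absurd (h1.trans h2.symm) hne
    · simp only [if_pos h1, if_neg h2]; ring
    · simp only [if_neg h1, if_pos h2]; ring
    · simp only [if_neg h1, if_neg h2]; ring
  rw [Finset.sum_congr rfl fun i _ => key i]
  rw [Finset.sum_add_distrib, Finset.sum_add_distrib,
    Finset.sum_ite_eq univ e.1 (fun i => t * psi S α i (divg E y i) + t ^ 2 * cc S α i),
    Finset.sum_ite_eq univ e.2 (fun i => -(t * psi S α i (divg E y i)) + t ^ 2 * cc S α i)]
  simp only [Finset.mem_univ, if_pos]
  unfold xst
  ring

/-- Edge-wise saturation from dual optimality. -/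
lemma saturation {n : ℕ} (E : Finset (Fin n × Fin n)) (W : Fin n × Fin n → ℝ)
    (S : Finset (Fin n)) {α lam : ℝ} (hα : 0 < α) (hlam : 0 < lam)
    (yhat : Fin n × Fin n → ℝ)
    (hfeas : ∀ e ∈ E, |yhat e| ≤ lam * W e)
    (hdual : ∀ y : Fin n × Fin n → ℝ, (∀ e ∈ E, |y e| ≤ lam * W e) →
      dualObj E S α y ≤ dualObj E S α yhat)
    (e : Fin n × Fin n) (he : e ∈ E) (hne : e.1 ≠ e.2) :
    (0 < xst E S α yhat e.1 - xst E S α yhat e.2 → yhat e = lam * W e) ∧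
    (xst E S α yhat e.1 - xst E S α yhat e.2 < 0 → yhat e = -(lam * W e)) := by
  set A := xst E S α yhat e.1 - xst E S α yhat e.2 with hA
  set B := cc S α e.1 + cc S α e.2 with hB
  clear_value A B
  have hBpos : 0 < B := by
    have := cc_pos S hα e.1; have := cc_pos S hα e.2; rw [hB]; linarith
  have habs := hfeas e he
  have hub : yhat e ≤ lam * W e := le_of_abs_le habs
  have hlb : -(lam * W e) ≤ yhat e := neg_le_of_abs_le habs
  have gen : ∀ t : ℝ, |yhat e + t| ≤ lam * W e → t * A - t ^ 2 * B ≤ 0 := by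
    intro t ht
    have hfeas' : ∀ f ∈ E, |(fun f => yhat f + if f = e then t else 0) f| ≤ lam * W f := by
      intro f hf
      by_cases hfe : f = e
      · subst hfe; simpa using ht
      · simpa [hfe] using hfeas f hf
    have hd := hdual _ hfeas'
    rw [dualObj_update E S hα yhat e he hne t] at hd
    rw [hA, hB]
    linarith
  constructor
  · intro hApos
    by_contra hne2
    have hlt : yhat e < lam * W e := lt_of_le_of_ne hub hne2
    set t := min (lam * W e - yhat e) (A / (2 * B)) with htdef
    clear_value t
    have ht0 : 0 < t := by
      rw [htdef]; exact lt_min (by linarith) (by positivity)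
    have h1 : t ≤ A / (2 * B) := by
      rw [htdef]; exact min_le_right _ _
    have htB : t * B < A := by
      have h2 : t * B ≤ (A / (2 * B)) * B := by nlinarith
      have h3 : (A / (2 * B)) * B = A / 2 := by field_simp
      nlinarith
    have hfeas_t : |yhat e + t| ≤ lam * W e := by
      rw [abs_le]
      refine ⟨by linarith, ?_⟩
      have h6 : t ≤ lam * W e - yhat e := by
        rw [htdef]; exact min_le_left _ _
      linarith
    have := gen t hfeas_t
    nlinarith
  · intro hAneg
    by_contra hne2
    have hgt : -(lam * W e) < yhat e :=
      lt_of_le_of_ne hlb (fun h => hne2 h.symm)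
    set t := -(min (lam * W e + yhat e) (-A / (2 * B))) with htdef
    clear_value t
    have ht0 : t < 0 := by
      have : 0 < min (lam * W e + yhat e) (-A / (2 * B)) :=
        lt_min (by linarith) (div_pos (by linarith) (by linarith))
      rw [htdef]; linarith
    have h1 : min (lam * W e + yhat e) (-A / (2 * B)) ≤ -A / (2 * B) := min_le_right _ _
    have h1' : min (lam * W e + yhat e) (-A / (2 * B)) ≤ lam * W e + yhat e := min_le_left _ _
    have htB : A < t * B := by
      have h2 : A / (2 * B) ≤ t := by
        rw [htdef]
        have : -(-A / (2 * B)) = A / (2 * B) := by ring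
        linarith
      have h3 : (A / (2 * B)) * B ≤ t * B := by nlinarith
      have h4 : (A / (2 * B)) * B = A / 2 := by field_simp
      nlinarith
    have hfeas_t : |yhat e + t| ≤ lam * W e := by
      rw [abs_le]
      constructor
      · rw [htdef]; linarith
      · linarith
    have := gen t hfeas_t
    nlinarith

/-- At a primal-dual optimal pair, every boundary edge of the thresholded
cluster `C = {i : x̂_i > 1/2}` is saturated with flow directed out of `C`. -/
theorem boundary_edges_saturated
    (n : ℕ) (E : Finset (Fin n × Fin n)) (hE : ∀ e ∈ E, e.1 < e.2)
    (W : Fin n × Fin n → ℝ) (hW : ∀ e ∈ E, 0 < W e)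
    (S : Finset (Fin n)) (hS : S.Nonempty)
    (α lam : ℝ) (hα : 0 < α) (hlam : 0 < lam)
    (xhat : Fin n → ℝ) (yhat : Fin n × Fin n → ℝ)
    (hprimal : ∀ z : Fin n → ℝ, nLasso E W S α lam xhat ≤ nLasso E W S α lam z)
    (hfeas : ∀ e ∈ E, |yhat e| ≤ lam * W e)
    (hdual : ∀ y : Fin n × Fin n → ℝ, (∀ e ∈ E, |y e| ≤ lam * W e) →
      dualObj E S α y ≤ dualObj E S α yhat)
    (C : Finset (Fin n)) (hC : C = Finset.univ.filter (fun i => 1 / 2 < xhat i)) :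
    ∀ e ∈ bdry E C,
      (e.1 ∈ C → yhat e = lam * W e) ∧ (e.2 ∈ C → yhat e = -(lam * W e)) := by
  set d : Fin n → ℝ := fun i => divg E yhat i with hd
  set xs : Fin n → ℝ := fun i => xst E S α yhat i with hxs
  -- saturation at every edge
  have sat : ∀ e ∈ E,
      (0 < xs e.1 - xs e.2 → yhat e = lam * W e) ∧
      (xs e.1 - xs e.2 < 0 → yhat e = -(lam * W e)) := by
    intro e he
    exact saturation E W S hα hlam yhat hfeas hdual e he (ne_of_lt (hE e he))
  -- complementary slackness
  have compl : ∀ e ∈ E,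
      yhat e * (xs e.1 - xs e.2) = lam * (W e * |xs e.1 - xs e.2|) := by
    intro e he
    rcases lt_trichotomy (xs e.1 - xs e.2) 0 with h | h | h
    · rw [(sat e he).2 h, abs_of_neg h]; ring
    · rw [h]; simp
    · rw [(sat e he).1 h, abs_of_pos h]; ring
  -- strong duality: nLasso of xs equals dualObj of yhat
  have hxsS : ∀ i ∈ S, xs i = 1 - d i := by
    intro i hi
    simp only [hxs, hd, xst, psi, if_pos hi]; ring
  have hxsSc : ∀ i ∈ Sᶜ, xs i = -(d i) / α := by
    intro i hi
    simp only [hxs, hd, xst, psi, if_neg (Finset.mem_compl.mp hi)]; ring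
  have hTVxs : lam * TV E W xs = ∑ i, xs i * d i := by
    unfold TV
    rw [Finset.mul_sum, sum_mul_divg E yhat xs]
    exact (Finset.sum_congr rfl fun e he => (compl e he)).symm
  have strong : nLasso E W S α lam xs = dualObj E S α yhat := by
    have hsplit : ∑ i, xs i * d i = ∑ i ∈ S, xs i * d i + ∑ i ∈ Sᶜ, xs i * d i :=
      (Finset.sum_add_sum_compl S _).symm
    have hs1 : ∑ i ∈ S, ((xs i - 1) ^ 2 / 2 + xs i * d i)
        = ∑ i ∈ S, -(d i ^ 2 / 2 - d i) :=
      Finset.sum_congr rfl fun i hi => by rw [hxsS i hi]; ring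
    have hs2 : ∑ i ∈ Sᶜ, (α * xs i ^ 2 / 2 + xs i * d i)
        = ∑ i ∈ Sᶜ, -(d i ^ 2 / (2 * α)) :=
      Finset.sum_congr rfl fun i hi => by rw [hxsSc i hi]; field_simp; ring
    rw [Finset.sum_add_distrib] at hs1 hs2
    have hD : dualObj E S α yhat
        = -∑ i ∈ S, (d i ^ 2 / 2 - d i) - ∑ i ∈ Sᶜ, d i ^ 2 / (2 * α) := rfl
    rw [Finset.sum_neg_distrib] at hs1 hs2
    rw [nLasso, hTVxs, hsplit, hD]
    linarith
  -- weak duality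
  have hedge : ∑ i, xhat i * d i ≤ lam * TV E W xhat := by
    rw [hd, sum_mul_divg E yhat xhat]
    unfold TV
    rw [Finset.mul_sum]
    apply Finset.sum_le_sum
    intro e he
    have h1 : yhat e * (xhat e.1 - xhat e.2) ≤ |yhat e| * |xhat e.1 - xhat e.2| := by
      calc yhat e * (xhat e.1 - xhat e.2) ≤ |yhat e * (xhat e.1 - xhat e.2)| := le_abs_self _
        _ = |yhat e| * |xhat e.1 - xhat e.2| := abs_mul _ _
    have h2 : |yhat e| * |xhat e.1 - xhat e.2| ≤ (lam * W e) * |xhat e.1 - xhat e.2| :=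
      mul_le_mul_of_nonneg_right (hfeas e he) (abs_nonneg _)
    calc yhat e * (xhat e.1 - xhat e.2) ≤ (lam * W e) * |xhat e.1 - xhat e.2| :=
          le_trans h1 h2
      _ = lam * (W e * |xhat e.1 - xhat e.2|) := by ring
  have weak : dualObj E S α yhat ≤ nLasso E W S α lam xhat := by
    have k1 : ∀ i ∈ S, 0 ≤ (xhat i - 1) ^ 2 / 2 + xhat i * d i + (d i ^ 2 / 2 - d i) := by
      intro i _
      nlinarith [sq_nonneg (xhat i - 1 + d i)]
    have k2 : ∀ i ∈ Sᶜ, 0 ≤ α * xhat i ^ 2 / 2 + xhat i * d i + d i ^ 2 / (2 * α) := by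
      intro i _
      have h0 : (0:ℝ) < 2 * α := by linarith
      have h := div_nonneg (sq_nonneg (α * xhat i + d i)) (le_of_lt h0)
      have heq : (α * xhat i + d i) ^ 2 / (2 * α)
          = α * xhat i ^ 2 / 2 + xhat i * d i + d i ^ 2 / (2 * α) := by
        field_simp; ring
      linarith [heq ▸ h]
    have A1 : 0 ≤ ∑ i ∈ S, ((xhat i - 1) ^ 2 / 2 + xhat i * d i + (d i ^ 2 / 2 - d i)) :=
      Finset.sum_nonneg k1
    have A2 : 0 ≤ ∑ i ∈ Sᶜ, (α * xhat i ^ 2 / 2 + xhat i * d i + d i ^ 2 / (2 * α)) :=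
      Finset.sum_nonneg k2
    rw [Finset.sum_add_distrib, Finset.sum_add_distrib] at A1 A2
    have hsplit : ∑ i, xhat i * d i = ∑ i ∈ S, xhat i * d i + ∑ i ∈ Sᶜ, xhat i * d i :=
      (Finset.sum_add_sum_compl S _).symm
    have hD : dualObj E S α yhat
        = -∑ i ∈ S, (d i ^ 2 / 2 - d i) - ∑ i ∈ Sᶜ, d i ^ 2 / (2 * α) := rfl
    rw [nLasso, hD]
    rw [hsplit] at hedge
    linarith
  -- objective values coincide
  have heqobj : nLasso E W S α lam xhat = nLasso E W S α lam xs := by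
    have h1 := hprimal xs
    linarith [weak, strong]
  -- uniqueness via strict convexity : xhat = xs
  have uniq : ∀ i, xhat i = xs i := by
    set m : Fin n → ℝ := fun i => (xhat i + xs i) / 2 with hm
    have c1 : ∑ i ∈ S, (m i - 1) ^ 2 / 2
        = (∑ i ∈ S, (xhat i - 1) ^ 2 / 2) / 2 + ((∑ i ∈ S, (xs i - 1) ^ 2 / 2) / 2
            - ∑ i ∈ S, (xhat i - xs i) ^ 2 / 8) := by
      calc ∑ i ∈ S, (m i - 1) ^ 2 / 2
          = ∑ i ∈ S, ((xhat i - 1) ^ 2 / 2 / 2 + ((xs i - 1) ^ 2 / 2 / 2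
              - (xhat i - xs i) ^ 2 / 8)) :=
            Finset.sum_congr rfl fun i _ => by simp only [hm]; ring
        _ = ∑ i ∈ S, (xhat i - 1) ^ 2 / 2 / 2 + (∑ i ∈ S, (xs i - 1) ^ 2 / 2 / 2
              - ∑ i ∈ S, (xhat i - xs i) ^ 2 / 8) := by
            rw [Finset.sum_add_distrib, Finset.sum_sub_distrib]
        _ = (∑ i ∈ S, (xhat i - 1) ^ 2 / 2) / 2 + ((∑ i ∈ S, (xs i - 1) ^ 2 / 2) / 2
              - ∑ i ∈ S, (xhat i - xs i) ^ 2 / 8) := by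
            rw [Finset.sum_div, Finset.sum_div]
    have c2 : ∑ i ∈ Sᶜ, α * m i ^ 2 / 2
        = (∑ i ∈ Sᶜ, α * xhat i ^ 2 / 2) / 2 + ((∑ i ∈ Sᶜ, α * xs i ^ 2 / 2) / 2
            - ∑ i ∈ Sᶜ, α * (xhat i - xs i) ^ 2 / 8) := by
      calc ∑ i ∈ Sᶜ, α * m i ^ 2 / 2
          = ∑ i ∈ Sᶜ, (α * xhat i ^ 2 / 2 / 2 + (α * xs i ^ 2 / 2 / 2
              - α * (xhat i - xs i) ^ 2 / 8)) :=
            Finset.sum_congr rfl fun i _ => by simp only [hm]; ring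
        _ = ∑ i ∈ Sᶜ, α * xhat i ^ 2 / 2 / 2 + (∑ i ∈ Sᶜ, α * xs i ^ 2 / 2 / 2
              - ∑ i ∈ Sᶜ, α * (xhat i - xs i) ^ 2 / 8) := by
            rw [Finset.sum_add_distrib, Finset.sum_sub_distrib]
        _ = (∑ i ∈ Sᶜ, α * xhat i ^ 2 / 2) / 2 + ((∑ i ∈ Sᶜ, α * xs i ^ 2 / 2) / 2
              - ∑ i ∈ Sᶜ, α * (xhat i - xs i) ^ 2 / 8) := by
            rw [Finset.sum_div, Finset.sum_div]
    have c3 : TV E W m ≤ TV E W xhat / 2 + TV E W xs / 2 := by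
      unfold TV
      have hpt : ∀ e ∈ E, W e * |m e.1 - m e.2|
          ≤ (W e * |xhat e.1 - xhat e.2| + W e * |xs e.1 - xs e.2|) / 2 := by
        intro e he
        have habs : |m e.1 - m e.2| ≤ (|xhat e.1 - xhat e.2| + |xs e.1 - xs e.2|) / 2 := by
          have hme : m e.1 - m e.2 = ((xhat e.1 - xhat e.2) + (xs e.1 - xs e.2)) / 2 := by
            simp only [hm]; ring
          rw [hme, abs_div]
          have := abs_add_le (xhat e.1 - xhat e.2) (xs e.1 - xs e.2)
          rw [abs_of_pos (by norm_num : (0:ℝ) < 2)]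
          linarith
        have hW' := le_of_lt (hW e he)
        calc W e * |m e.1 - m e.2|
            ≤ W e * ((|xhat e.1 - xhat e.2| + |xs e.1 - xs e.2|) / 2) :=
              mul_le_mul_of_nonneg_left habs hW'
          _ = (W e * |xhat e.1 - xhat e.2| + W e * |xs e.1 - xs e.2|) / 2 := by ring
      have h := Finset.sum_le_sum hpt
      have heq : ∑ e ∈ E, (W e * |xhat e.1 - xhat e.2| + W e * |xs e.1 - xs e.2|) / 2
          = (∑ e ∈ E, W e * |xhat e.1 - xhat e.2|) / 2
            + (∑ e ∈ E, W e * |xs e.1 - xs e.2|) / 2 := by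
        rw [← Finset.sum_div, Finset.sum_add_distrib, add_div]
      linarith
    -- sum up
    have hmm := hprimal m
    have key : ∑ i ∈ S, (xhat i - xs i) ^ 2 / 8
        + ∑ i ∈ Sᶜ, α * (xhat i - xs i) ^ 2 / 8 ≤ 0 := by
      have e1 : nLasso E W S α lam m
          = ((∑ i ∈ S, (xhat i - 1) ^ 2 / 2) / 2 + ((∑ i ∈ S, (xs i - 1) ^ 2 / 2) / 2
              - ∑ i ∈ S, (xhat i - xs i) ^ 2 / 8))
            + ((∑ i ∈ Sᶜ, α * xhat i ^ 2 / 2) / 2 + ((∑ i ∈ Sᶜ, α * xs i ^ 2 / 2) / 2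
              - ∑ i ∈ Sᶜ, α * (xhat i - xs i) ^ 2 / 8))
            + lam * TV E W m := by
        rw [nLasso, c1, c2]
      have e2 : nLasso E W S α lam xhat
          = ∑ i ∈ S, (xhat i - 1) ^ 2 / 2 + ∑ i ∈ Sᶜ, α * xhat i ^ 2 / 2
            + lam * TV E W xhat := rfl
      have e3 : nLasso E W S α lam xs
          = ∑ i ∈ S, (xs i - 1) ^ 2 / 2 + ∑ i ∈ Sᶜ, α * xs i ^ 2 / 2
            + lam * TV E W xs := rfl
      have hTVle : lam * TV E W m ≤ lam * TV E W xhat / 2 + lam * TV E W xs / 2 := by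
        have := mul_le_mul_of_nonneg_left c3 hlam.le
        nlinarith [this]
      rw [heqobj] at hmm
      linarith [hmm, e1.le, e2.ge, e3.ge, heqobj]
    have hpos1 : 0 ≤ ∑ i ∈ S, (xhat i - xs i) ^ 2 / 8 :=
      Finset.sum_nonneg fun i _ => by positivity
    have hpos2 : 0 ≤ ∑ i ∈ Sᶜ, α * (xhat i - xs i) ^ 2 / 8 :=
      Finset.sum_nonneg fun i _ => by positivity
    have hz1 : ∑ i ∈ S, (xhat i - xs i) ^ 2 / 8 = 0 := le_antisymm (by linarith) hpos1
    have hz2 : ∑ i ∈ Sᶜ, α * (xhat i - xs i) ^ 2 / 8 = 0 := le_antisymm (by linarith) hpos2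
    intro i
    by_cases hi : i ∈ S
    · have hzi := (Finset.sum_eq_zero_iff_of_nonneg (fun i _ => by positivity)).mp hz1 i hi
      have h8 : (xhat i - xs i) ^ 2 = 0 := by linarith
      have h9 : xhat i - xs i = 0 := by
        exact pow_eq_zero_iff (two_ne_zero) |>.mp h8
      linarith
    · have hi' : i ∈ Sᶜ := Finset.mem_compl.mpr hi
      have hzi := (Finset.sum_eq_zero_iff_of_nonneg (fun i _ => by positivity)).mp hz2 i hi'
      have h8 : α * (xhat i - xs i) ^ 2 = 0 := by linarith
      have h9 : (xhat i - xs i) ^ 2 = 0 := by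
        rcases mul_eq_zero.mp h8 with h | h
        · exact absurd h (ne_of_gt hα)
        · exact h
      have h10 : xhat i - xs i = 0 := pow_eq_zero_iff (two_ne_zero) |>.mp h9
      linarith
  -- conclusion
  intro e he
  rw [bdry, Finset.mem_filter] at he
  obtain ⟨heE, hcond⟩ := he
  constructor
  · intro h1
    have h2 : e.2 ∉ C := by
      rcases hcond with ⟨_, h⟩ | ⟨h, _⟩
      · exact h
      · exact absurd h1 h
    have hx1 : 1 / 2 < xhat e.1 := by
      rw [hC] at h1; exact (Finset.mem_filter.mp h1).2
    have hx2 : ¬ (1 / 2 < xhat e.2) := by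
      rw [hC] at h2
      intro hcon
      exact h2 (Finset.mem_filter.mpr ⟨Finset.mem_univ _, hcon⟩)
    push_neg at hx2
    have hApos : 0 < xs e.1 - xs e.2 := by
      rw [← uniq e.1, ← uniq e.2]; linarith
    exact (sat e heE).1 hApos
  · intro h2
    have h1 : e.1 ∉ C := by
      rcases hcond with ⟨_, h⟩ | ⟨h, _⟩
      · exact absurd h2 h
      · exact h
    have hx2 : 1 / 2 < xhat e.2 := by
      rw [hC] at h2; exact (Finset.mem_filter.mp h2).2
    have hx1 : ¬ (1 / 2 < xhat e.1) := by
      rw [hC] at h1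
      intro hcon
      exact h1 (Finset.mem_filter.mpr ⟨Finset.mem_univ _, hcon⟩)
    push_neg at hx1
    have hAneg : xs e.1 - xs e.2 < 0 := by
      rw [← uniq e.1, ← uniq e.2]; linarith
    exact (sat e heE).2 hAneg
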